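/- Let E be a Hilbert C*-module and let A, C be adjointable operators on E such that the closure of the range of A* is orthogonally complemented in E. If AA* = λ CC* for some real λ, then the range of A is contained in the range of C. -/

import Mathlib

open scoped ComplexOrder

/-- `S` is orthogonally complemented in the Hilbert C*-module `E`. -/
def OrthoComplemented {A E : Type*} [NonUnitalCStarAlgebra A] [PartialOrder A]
    [StarOrderedRing A] [NormedAddCommGroup E] [NormedSpace ℂ E] [SMul A E]
    [CStarModule A E] (S : Set E) : Prop :=
  ∀ x : E, ∃ m ∈ S, ∃ n : E, (∀ y ∈ S, inner (𝕜 := A) y n = 0) ∧ x = m + n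

/-- If `A, C` are adjointable operators on a Hilbert C*-module, the closure of the range of `A*`
is orthogonally complemented, and `AA* = λ CC*` for some real `λ`, then
`range A ⊆ range C`. -/
theorem stmt_10 {A E : Type*} [NonUnitalCStarAlgebra A] [PartialOrder A] [StarOrderedRing A]
    [NormedAddCommGroup E] [NormedSpace ℂ E] [SMul A E] [CStarModule A E] [CompleteSpace E]
    (T T' C C' : E →L[ℂ] E)
    (hT : ∀ (x y : E), inner (𝕜 := A) (T x) y = inner (𝕜 := A) x (T' y))
    (hC : ∀ (x y : E), inner (𝕜 := A) (C x) y = inner (𝕜 := A) x (C' y))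
    (hTc : OrthoComplemented (A := A) (closure (Set.range ⇑T')))
    (hlam : ∃ lam : ℝ, T ∘L T' = (lam : ℂ) • (C ∘L C')) :
    Set.range ⇑T ⊆ Set.range ⇑C := by
  obtain ⟨lam, hlam⟩ := hlam
  -- the key pointwise identity
  have hTT' : ∀ z : E, T (T' z) = (lam : ℂ) • C (C' z) := fun z => by
    have := congrFun (congrArg DFunLike.coe hlam) z
    simpa using this
  have h1 : ∀ z : E, inner (𝕜 := A) (T' z) (T' z)
      = (lam : ℂ) • inner (𝕜 := A) (C' z) (C' z) := by
    intro z
    have h2 := hT (T' z) z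
    rw [hTT' z] at h2
    rw [← h2, CStarModule.inner_smul_left_complex, hC (C' z) z]
    simp [Complex.ext_iff]
  have hnormsq : ∀ z : E, ‖T' z‖ ^ 2 = |lam| * ‖C' z‖ ^ 2 := by
    intro z
    rw [CStarModule.norm_sq_eq (A := A), CStarModule.norm_sq_eq (A := A), h1 z, norm_smul]
    simp
  rintro v ⟨x, rfl⟩
  by_cases hl : lam = 0
  · -- then T' = 0 and hence T = 0
    have hT'0 : ∀ z : E, T' z = 0 := by
      intro z
      have := hnormsq z
      rw [hl] at this
      simpa using norm_eq_zero.mp (pow_eq_zero_iff (n := 2) (by norm_num) |>.mp (by simpa using this))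
    have : inner (𝕜 := A) (T x) (T x) = 0 := by
      rw [hT x (T x), hT'0]
      simp
    refine ⟨0, ?_⟩
    rw [map_zero, CStarModule.inner_self.mp this]
  · -- main case
    obtain ⟨m, hm, n, hn, hxmn⟩ := hTc x
    have hTn : T n = 0 := by
      have : inner (𝕜 := A) (T n) (T n) = 0 := by
        rw [hT n (T n), ← CStarModule.star_inner]
        rw [hn (T' (T n)) (subset_closure ⟨T n, rfl⟩)]
        simp
      exact CStarModule.inner_self.mp this
    rw [mem_closure_iff_seq_limit] at hm
    obtain ⟨s, hsmem, hslim⟩ := hm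
    choose w hw using hsmem
    have hlim' : Filter.Tendsto (fun k => T' (w k)) Filter.atTop (nhds m) := by
      simpa only [hw] using hslim
    -- the sequence C' (w k) is Cauchy
    have hc : (0:ℝ) < Real.sqrt |lam| := Real.sqrt_pos.mpr (abs_pos.mpr hl)
    have hdist : ∀ i j : ℕ, dist (C' (w i)) (C' (w j))
        = (Real.sqrt |lam|)⁻¹ * dist (T' (w i)) (T' (w j)) := by
      intro i j
      rw [dist_eq_norm, dist_eq_norm, ← map_sub, ← map_sub]
      have h := hnormsq (w i - w j)
      have hsq : ((Real.sqrt |lam|)⁻¹ * ‖T' (w i - w j)‖) ^ 2 = ‖C' (w i - w j)‖ ^ 2 := by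
        rw [mul_pow, h]
        rw [inv_pow, Real.sq_sqrt (abs_nonneg lam)]
        field_simp
      have := (sq_eq_sq₀ (by positivity) (norm_nonneg _)).mp hsq
      linarith
    have hcauchyT : CauchySeq (fun k => T' (w k)) := hlim'.cauchySeq
    have hcauchyC : CauchySeq (fun k => C' (w k)) := by
      rw [Metric.cauchySeq_iff] at hcauchyT ⊢
      intro ε hε
      obtain ⟨N, hN⟩ := hcauchyT (Real.sqrt |lam| * ε) (by positivity)
      refine ⟨N, fun i hi j hj => ?_⟩
      rw [hdist i j]
      have := hN i hi j hj
      rw [inv_mul_lt_iff₀ hc]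
      exact this.trans_le (le_of_eq rfl)
    obtain ⟨u, hu⟩ := cauchySeq_tendsto_of_complete hcauchyC
    refine ⟨(lam : ℂ) • u, ?_⟩
    have htend1 : Filter.Tendsto (fun k => T (T' (w k))) Filter.atTop (nhds (T m)) :=
      (T.continuous.tendsto m).comp hlim'
    have htend2 : Filter.Tendsto (fun k => T (T' (w k))) Filter.atTop
        (nhds ((lam : ℂ) • C u)) := by
      simp only [hTT']
      exact (((C.continuous.tendsto u).comp hu).const_smul _)
    have hTm : T m = (lam : ℂ) • C u := tendsto_nhds_unique htend1 htend2
    rw [map_smul, ← hTm, hxmn, map_add, hTn, add_zero]
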